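/- Let U ⊆ ℂᵐ be open, H a complex Hilbert space with smoothly varying metric h admitting Chern connection D = δ + ∂̄ with curvature Θ satisfying iΘ ≤_G 0 (Griffiths seminegative). Let f : [0,∞) → ℝ be twice differentiable, strictly increasing, and concave, with f'(x) + f''(x)·x ≥ 0 for all x ≥ 0. Then for every holomorphic local section u of H, the function t ↦ f(‖u(t)‖²_{h_t}) is plurisubharmonic. -/

import Mathlib

set_option linter.unusedSectionVars false


/-- The (1,0)-part of the real Fréchet derivative of `u` at `t` in direction `z`:
`∂u(z) = ½(Du(z) − i·Du(i·z))`. -/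
noncomputable def del {E F : Type*} [NormedAddCommGroup E] [NormedSpace ℂ E]
    [NormedAddCommGroup F] [NormedSpace ℂ F] (u : E → F) (t z : E) : F :=
  (2⁻¹ : ℂ) • (fderiv ℝ u t z - Complex.I • fderiv ℝ u t (Complex.I • z))

/-- The (0,1)-part of the real Fréchet derivative of `u` at `t` in direction `z`:
`∂̄u(z) = ½(Du(z) + i·Du(i·z))`. -/
noncomputable def delbar {E F : Type*} [NormedAddCommGroup E] [NormedSpace ℂ E]
    [NormedAddCommGroup F] [NormedSpace ℂ F] (u : E → F) (t z : E) : F :=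
  (2⁻¹ : ℂ) • (fderiv ℝ u t z + Complex.I • fderiv ℝ u t (Complex.I • z))
/-- The `(z, z̄')`-component of the Chern curvature `Θ = δ∂̄ + ∂̄δ` (as a `(1,1)`-form),
i.e. `Θ_{z z̄'} u = δ_z(∂̄_{z'} u) − ∂̄_{z'}(δ_z u)`. -/
noncomputable def curvC {m : ℕ} {H : Type*} [NormedAddCommGroup H] [NormedSpace ℂ H]
    (δ : ((Fin m → ℂ) → H) → (Fin m → ℂ) → (Fin m → ℂ) → H)
    (u : (Fin m → ℂ) → H) (t z z' : Fin m → ℂ) : H :=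
  δ (fun s => delbar u s z') t z - delbar (fun s => δ u s z) t z'
/-- Plurisubharmonicity (for the smooth functions occurring here): the complex Hessian is
positive semidefinite, componentwise `0 ≤ ∂_z ∂̄_z f` at every point of `U`, in every
direction `z`. -/
noncomputable def PshOn {m : ℕ} (f : (Fin m → ℂ) → ℝ) (U : Set (Fin m → ℂ)) : Prop :=
  ∀ t ∈ U, ∀ z : Fin m → ℂ,
    0 ≤ (del (fun s => delbar (fun s' => (f s' : ℂ)) s z) t z).re

open Complex Filter Asymptotics

section basic
variable {E F : Type*} [NormedAddCommGroup E] [NormedSpace ℂ E]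
  [NormedAddCommGroup F] [NormedSpace ℂ F]

lemma del_congr {u v : E → F} {t : E} (hyp : u =ᶠ[nhds t] v) (z : E) :
    del u t z = del v t z := by
  unfold del; rw [hyp.fderiv_eq]

lemma delbar_congr {u v : E → F} {t : E} (hyp : u =ᶠ[nhds t] v) (z : E) :
    delbar u t z = delbar v t z := by
  unfold delbar; rw [hyp.fderiv_eq]

lemma del_zero_dir (u : E → F) (t : E) : del u t 0 = 0 := by
  simp [del]

lemma del_of_not_diff {u : E → F} {t : E} (hyp : ¬ DifferentiableAt ℝ u t) (z : E) :
    del u t z = 0 := by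
  simp [del, fderiv_zero_of_not_differentiableAt hyp]

lemma delbar_of_not_diff {u : E → F} {t : E} (hyp : ¬ DifferentiableAt ℝ u t) (z : E) :
    delbar u t z = 0 := by
  simp [delbar, fderiv_zero_of_not_differentiableAt hyp]

lemma delbar_add {u v : E → F} {t : E} (hu : DifferentiableAt ℝ u t)
    (hv : DifferentiableAt ℝ v t) (z : E) :
    delbar (fun s => u s + v s) t z = delbar u t z + delbar v t z := by
  unfold delbar
  rw [fderiv_fun_add hu hv]
  simp only [ContinuousLinearMap.add_apply, smul_add]
  module

lemma delbar_const (c : F) (t z : E) : delbar (fun _ => c) t z = 0 := by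
  simp [delbar]

lemma del_mul {p q : E → ℂ} {t : E} (hp : DifferentiableAt ℝ p t)
    (hq : DifferentiableAt ℝ q t) (z : E) :
    del (fun s => p s * q s) t z = del p t z * q t + p t * del q t z := by
  unfold del
  rw [fderiv_fun_mul hp hq]
  simp only [ContinuousLinearMap.add_apply, ContinuousLinearMap.smul_apply, smul_eq_mul]
  ring

lemma del_hasfd {q : E → F} {D : E →L[ℝ] F} {t : E}
    (hq : HasFDerivAt q D t) (z : E) :
    del q t z = (2⁻¹ : ℂ) • (D z - Complex.I • D (Complex.I • z)) := by
  unfold del; rw [hq.fderiv]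

end basic

section pert
variable {m : ℕ} {H : Type*} [NormedAddCommGroup H] [NormedSpace ℂ H]

/-- the constant-direction conjugate-linear perturbation map as a CLM -/
noncomputable def pertCLM (j : Fin m) (a : H) : (Fin m → ℂ) →L[ℝ] H :=
  ((ContinuousLinearMap.toSpanSingleton ℂ a).restrictScalars ℝ).comp
    ((Complex.conjCLE.toContinuousLinearMap).comp
      ((ContinuousLinearMap.proj j : (Fin m → ℂ) →L[ℂ] ℂ).restrictScalars ℝ))

@[simp] lemma pertCLM_apply (j : Fin m) (a : H) (s : Fin m → ℂ) :
    pertCLM j a s = (starRingEnd ℂ) (s j) • a := rfl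

lemma pert_hasFDerivAt (j : Fin m) (a : H) (t : Fin m → ℂ) :
    HasFDerivAt (fun s : Fin m → ℂ => (starRingEnd ℂ) (s j - t j) • a) (pertCLM j a) t := by
  have : (fun s : Fin m → ℂ => (starRingEnd ℂ) (s j - t j) • a)
      = fun s => pertCLM j a s - (starRingEnd ℂ) (t j) • a := by
    funext s
    simp [map_sub, sub_smul]
  rw [this]
  exact (pertCLM j a).hasFDerivAt.sub_const _

lemma pert_smooth (j : Fin m) (a : H) (t : Fin m → ℂ) :
    ContDiff ℝ (⊤ : ℕ∞) (fun s : Fin m → ℂ => (starRingEnd ℂ) (s j - t j) • a) := by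
  have : (fun s : Fin m → ℂ => (starRingEnd ℂ) (s j - t j) • a)
      = fun s => pertCLM j a s - (starRingEnd ℂ) (t j) • a := by
    funext s; simp [map_sub, sub_smul]
  rw [this]
  exact ((pertCLM j a).contDiff).sub contDiff_const

lemma delbar_pert {v : (Fin m → ℂ) → H} {t : Fin m → ℂ} (hv : DifferentiableAt ℝ v t)
    (j : Fin m) (a : H) (z : Fin m → ℂ) :
    delbar (fun s => v s + (starRingEnd ℂ) (s j - t j) • a) t z
      = delbar v t z + (starRingEnd ℂ) (z j) • a := by
  unfold delbar
  rw [fderiv_fun_add hv (pert_hasFDerivAt j a t).differentiableAt]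
  rw [(pert_hasFDerivAt j a t).fderiv]
  simp only [ContinuousLinearMap.add_apply, pertCLM_apply, Pi.smul_apply, smul_eq_mul,
    map_mul, Complex.conj_I]
  have : (Complex.I • ((fderiv ℝ v t) (Complex.I • z) + (-Complex.I * (starRingEnd ℂ) (z j)) • a) : H)
      = Complex.I • (fderiv ℝ v t) (Complex.I • z) + (starRingEnd ℂ) (z j) • a := by
    rw [smul_add, smul_smul]
    have : Complex.I * (-Complex.I * (starRingEnd ℂ) (z j)) = (starRingEnd ℂ) (z j) := by
      ring_nf
      rw [Complex.I_sq]
      ring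
    rw [this]
  rw [this]
  module

lemma delbar_real_conj {E : Type*} [NormedAddCommGroup E] [NormedSpace ℂ E]
    (F : E → ℝ) (t z : E) :
    delbar (fun s => (F s : ℂ)) t z = (starRingEnd ℂ) (del (fun s => (F s : ℂ)) t z) := by
  have hD : ∀ w, ((fderiv ℝ (fun s => (F s : ℂ)) t w).im) = 0 := by
    intro w
    by_cases hF : DifferentiableAt ℝ F t
    · have : HasFDerivAt (fun s => (F s : ℂ)) (Complex.ofRealCLM.comp (fderiv ℝ F t)) t :=
        Complex.ofRealCLM.hasFDerivAt.comp t hF.hasFDerivAt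
      rw [this.fderiv]; simp
    · have : ¬ DifferentiableAt ℝ (fun s => (F s : ℂ)) t := by
        intro hc
        exact hF (by simpa [Function.comp_def] using (Complex.reCLM.differentiableAt.comp t hc))
      rw [fderiv_zero_of_not_differentiableAt this]; simp
  unfold del delbar
  set D := fderiv ℝ (fun s => (F s : ℂ)) t
  have h1 : (starRingEnd ℂ) (D z) = D z := by
    rw [Complex.conj_eq_iff_im]; exact hD z
  have h2 : (starRingEnd ℂ) (D (Complex.I • z)) = D (Complex.I • z) := by
    rw [Complex.conj_eq_iff_im]; exact hD _
  simp only [smul_eq_mul, map_mul, map_sub, map_add]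
  rw [h1, h2]
  simp only [Complex.conj_I, smul_eq_mul]
  rw [map_inv₀]
  have : ((starRingEnd ℂ) 2 : ℂ) = 2 := by
    rw [Complex.conj_eq_iff_im]; norm_num
  rw [this]
  ring
end pert

section halg
variable {m : ℕ} {H : Type*} [NormedAddCommGroup H] [NormedSpace ℂ H]
variable {U : Set (Fin m → ℂ)} {h : (Fin m → ℂ) → H → H → ℂ}

lemma h_zero_left (hsub : ∀ t ∈ U, ∀ u v w' : H, h t (u - v) w' = h t u w' - h t v w')
    {t : Fin m → ℂ} (ht : t ∈ U) (w : H) : h t 0 w = 0 := by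
  have := hsub t ht 0 0 w
  simpa using this

lemma h_zero_right (hsub : ∀ t ∈ U, ∀ u v w' : H, h t (u - v) w' = h t u w' - h t v w')
    (hsymm : ∀ t ∈ U, ∀ u v : H, h t u v = starRingEnd ℂ (h t v u))
    {t : Fin m → ℂ} (ht : t ∈ U) (w : H) : h t w 0 = 0 := by
  rw [hsymm t ht, h_zero_left hsub ht]; simp

lemma h2add (hadd : ∀ t ∈ U, ∀ u v w' : H, h t (u + v) w' = h t u w' + h t v w')
    (hsymm : ∀ t ∈ U, ∀ u v : H, h t u v = starRingEnd ℂ (h t v u))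
    {t : Fin m → ℂ} (ht : t ∈ U) (x y z' : H) :
    h t x (y + z') = h t x y + h t x z' := by
  rw [hsymm t ht x (y + z'), hadd t ht, map_add, ← hsymm t ht, ← hsymm t ht]

lemma h2smul (hsmul : ∀ t ∈ U, ∀ (c : ℂ) (u v : H), h t (c • u) v = c * h t u v)
    (hsymm : ∀ t ∈ U, ∀ u v : H, h t u v = starRingEnd ℂ (h t v u))
    {t : Fin m → ℂ} (ht : t ∈ U) (c : ℂ) (x y : H) :
    h t x (c • y) = (starRingEnd ℂ) c * h t x y := by
  rw [hsymm t ht x (c • y), hsmul t ht, map_mul, ← hsymm t ht]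

lemma h2sub (hsub : ∀ t ∈ U, ∀ u v w' : H, h t (u - v) w' = h t u w' - h t v w')
    (hsymm : ∀ t ∈ U, ∀ u v : H, h t u v = starRingEnd ℂ (h t v u))
    {t : Fin m → ℂ} (ht : t ∈ U) (x y z' : H) :
    h t x (y - z') = h t x y - h t x z' := by
  rw [hsymm t ht x (y - z'), hsub t ht, map_sub, ← hsymm t ht, ← hsymm t ht]

lemma h_real (hsymm : ∀ t ∈ U, ∀ u v : H, h t u v = starRingEnd ℂ (h t v u))
    {t : Fin m → ℂ} (ht : t ∈ U) (w : H) : h t w w = (((h t w w).re : ℝ) : ℂ) := by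
  have := (hsymm t ht w w).symm
  exact (Complex.conj_eq_iff_re.mp this).symm

lemma h_nonneg (hsub : ∀ t ∈ U, ∀ u v w' : H, h t (u - v) w' = h t u w' - h t v w')
    (hpos : ∀ t ∈ U, ∀ u : H, u ≠ 0 → 0 < (h t u u).re)
    {t : Fin m → ℂ} (ht : t ∈ U) (w : H) : 0 ≤ (h t w w).re := by
  by_cases hw : w = 0
  · subst hw; rw [h_zero_left hsub ht]; simp
  · exact le_of_lt (hpos t ht w hw)

lemma h_ne_zero (hpos : ∀ t ∈ U, ∀ u : H, u ≠ 0 → 0 < (h t u u).re)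
    {t : Fin m → ℂ} (ht : t ∈ U) {w : H} (hw : w ≠ 0) : h t w w ≠ 0 := by
  intro hc
  have := hpos t ht w hw
  rw [hc] at this; simp at this

end halg

section trick
variable {m : ℕ} {H : Type*} [NormedAddCommGroup H] [NormedSpace ℂ H]
variable {U : Set (Fin m → ℂ)} {h : (Fin m → ℂ) → H → H → ℂ}
variable {δ : ((Fin m → ℂ) → H) → (Fin m → ℂ) → (Fin m → ℂ) → H}

lemma diffAt_proj (j : Fin m) (t : Fin m → ℂ) :
    DifferentiableAt ℝ (fun s : Fin m → ℂ => s j - t j) t := by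
  have : DifferentiableAt ℝ (fun s : Fin m → ℂ => s j) t :=
    ((ContinuousLinearMap.proj j : (Fin m → ℂ) →L[ℂ] ℂ).restrictScalars ℝ).differentiableAt
  exact this.sub_const _

/-- K1: differentiability of `s ↦ h s (w s) a` at a point where `h t (w t) a ≠ 0`. -/
lemma diff_pair_const (hU : IsOpen U)
    (hadd : ∀ t ∈ U, ∀ u v w' : H, h t (u + v) w' = h t u w' + h t v w')
    (hsub : ∀ t ∈ U, ∀ u v w' : H, h t (u - v) w' = h t u w' - h t v w')
    (hsmul : ∀ t ∈ U, ∀ (c : ℂ) (u v : H), h t (c • u) v = c * h t u v)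
    (hsymm : ∀ t ∈ U, ∀ u v : H, h t u v = starRingEnd ℂ (h t v u))
    (hδ : ∀ u v : (Fin m → ℂ) → H, ContDiffOn ℝ (⊤ : ℕ∞) u U → ContDiffOn ℝ (⊤ : ℕ∞) v U →
      ∀ t ∈ U, ∀ z : Fin m → ℂ,
        del (fun s => h s (u s) (v s)) t z = h t (δ u t z) (v t) + h t (u t) (delbar v t z))
    {w : (Fin m → ℂ) → H} (hw : ContDiffOn ℝ (⊤ : ℕ∞) w U)
    {t : Fin m → ℂ} (ht : t ∈ U) (a : H) (j : Fin m)
    (hna : h t (w t) a ≠ 0) :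
    DifferentiableAt ℝ (fun s => h s (w s) a) t := by
  by_contra hnd
  set z : Fin m → ℂ := Pi.single j 1 with hz
  set φ0 : (Fin m → ℂ) → ℂ := fun s => h s (w s) a with hφ0
  set v1 : (Fin m → ℂ) → H := fun s => a + (starRingEnd ℂ) (s j - t j) • a with hv1
  have hv1sm : ContDiffOn ℝ (⊤ : ℕ∞) v1 U :=
    (contDiff_const.add (pert_smooth j a t)).contDiffOn
  have hUn : U ∈ nhds t := hU.mem_nhds ht
  have heq : ∀ s ∈ U, h s (w s) (v1 s) = (1 + (s j - t j)) * φ0 s := by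
    intro s hs
    rw [hv1]
    rw [h2add hadd hsymm hs, h2smul hsmul hsymm hs]
    simp only [Complex.conj_conj, hφ0]
    ring
  have heq' : (fun s => h s (w s) (v1 s)) =ᶠ[nhds t] (fun s => (1 + (s j - t j)) * φ0 s) :=
    Filter.eventually_of_mem hUn heq
  have hnd1 : ¬ DifferentiableAt ℝ (fun s => h s (w s) (v1 s)) t := by
    intro hd
    apply hnd
    have hd' : DifferentiableAt ℝ (fun s => (1 + (s j - t j)) * φ0 s) t :=
      hd.congr_of_eventuallyEq heq'.symm
    have hg : DifferentiableAt ℝ (fun s : Fin m → ℂ => 1 + (s j - t j)) t :=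
      (differentiableAt_const _).add (diffAt_proj j t)
    have hne : (1 : ℂ) + (t j - t j) ≠ 0 := by simp
    have hinv : DifferentiableAt ℝ (fun s : Fin m → ℂ => (1 + (s j - t j))⁻¹) t := hg.inv hne
    have hdd : DifferentiableAt ℝ
        (fun s => (1 + (s j - t j))⁻¹ * ((1 + (s j - t j)) * φ0 s)) t := hinv.mul hd'
    have hev : (fun s => (1 + (s j - t j))⁻¹ * ((1 + (s j - t j)) * φ0 s)) =ᶠ[nhds t] φ0 := by
      have hcont : ContinuousAt (fun s : Fin m → ℂ => 1 + (s j - t j)) t := hg.continuousAt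
      have : ∀ᶠ s in nhds t, (1 : ℂ) + (s j - t j) ≠ 0 := hcont.eventually_ne hne
      filter_upwards [this] with s hs
      field_simp
    exact hdd.congr_of_eventuallyEq hev.symm
  have h0 : fderiv ℝ φ0 t = 0 := fderiv_zero_of_not_differentiableAt hnd
  have h1 : fderiv ℝ (fun s => h s (w s) (v1 s)) t = 0 :=
    fderiv_zero_of_not_differentiableAt hnd1
  have d0 : del φ0 t z = 0 := by simp [del, h0]
  have d1 : del (fun s => h s (w s) (v1 s)) t z = 0 := by simp [del, h1]
  have e0 : del φ0 t z = h t (δ w t z) a + h t (w t) (delbar (fun _ => a) t z) :=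
    hδ w (fun _ => a) hw contDiffOn_const t ht z
  have e1 : del (fun s => h s (w s) (v1 s)) t z
      = h t (δ w t z) (v1 t) + h t (w t) (delbar v1 t z) :=
    hδ w v1 hw hv1sm t ht z
  rw [d0, delbar_const, h_zero_right hsub hsymm ht, add_zero] at e0
  have hv1t : v1 t = a := by simp [hv1]
  have hdb : delbar v1 t z = a := by
    rw [hv1]
    rw [delbar_pert (differentiableAt_const a) j a z]
    simp [delbar_const, hz]
  rw [d1, hv1t, hdb, ← e0, zero_add] at e1
  exact hna e1.symm
end trick

section trick2
variable {m : ℕ} {H : Type*} [NormedAddCommGroup H] [NormedSpace ℂ H]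
variable {U : Set (Fin m → ℂ)} {h : (Fin m → ℂ) → H → H → ℂ}
variable {δ : ((Fin m → ℂ) → H) → (Fin m → ℂ) → (Fin m → ℂ) → H}

/-- K2 : differentiability of `s ↦ h s (u s) (v s)` where `u t ≠ 0`. -/
lemma diff_pair_left (hU : IsOpen U)
    (hadd : ∀ t ∈ U, ∀ u v w' : H, h t (u + v) w' = h t u w' + h t v w')
    (hsub : ∀ t ∈ U, ∀ u v w' : H, h t (u - v) w' = h t u w' - h t v w')
    (hsmul : ∀ t ∈ U, ∀ (c : ℂ) (u v : H), h t (c • u) v = c * h t u v)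
    (hsymm : ∀ t ∈ U, ∀ u v : H, h t u v = starRingEnd ℂ (h t v u))
    (hpos : ∀ t ∈ U, ∀ u : H, u ≠ 0 → 0 < (h t u u).re)
    (hδ : ∀ u v : (Fin m → ℂ) → H, ContDiffOn ℝ (⊤ : ℕ∞) u U → ContDiffOn ℝ (⊤ : ℕ∞) v U →
      ∀ t ∈ U, ∀ z : Fin m → ℂ,
        del (fun s => h s (u s) (v s)) t z = h t (δ u t z) (v t) + h t (u t) (delbar v t z))
    {u v : (Fin m → ℂ) → H} (hu : ContDiffOn ℝ (⊤ : ℕ∞) u U)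
    (hv : ContDiffOn ℝ (⊤ : ℕ∞) v U)
    {t : Fin m → ℂ} (ht : t ∈ U) (j : Fin m)
    (hut : u t ≠ 0) :
    DifferentiableAt ℝ (fun s => h s (u s) (v s)) t := by
  by_contra hnd
  set z : Fin m → ℂ := Pi.single j 1 with hz
  set a : H := u t with ha
  have hUn : U ∈ nhds t := hU.mem_nhds ht
  have hna : h t (u t) a ≠ 0 := h_ne_zero hpos ht hut
  have hA : DifferentiableAt ℝ (fun s => h s (u s) a) t :=
    diff_pair_const hU hadd hsub hsmul hsymm hδ hu ht a j hna
  set v1 : (Fin m → ℂ) → H := fun s => v s + (starRingEnd ℂ) (s j - t j) • a with hv1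
  have hv1sm : ContDiffOn ℝ (⊤ : ℕ∞) v1 U := hv.add (pert_smooth j a t).contDiffOn
  have heq : ∀ s ∈ U, h s (u s) (v1 s)
      = h s (u s) (v s) + (s j - t j) * h s (u s) a := by
    intro s hs
    rw [hv1]
    rw [h2add hadd hsymm hs, h2smul hsmul hsymm hs]
    simp only [Complex.conj_conj]
  have heq' : (fun s => h s (u s) (v1 s))
      =ᶠ[nhds t] (fun s => h s (u s) (v s) + (s j - t j) * h s (u s) a) :=
    Filter.eventually_of_mem hUn heq
  have hcor : DifferentiableAt ℝ (fun s => (s j - t j) * h s (u s) a) t :=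
    (diffAt_proj j t).mul hA
  have hnd1 : ¬ DifferentiableAt ℝ (fun s => h s (u s) (v1 s)) t := by
    intro hd
    apply hnd
    have hd' : DifferentiableAt ℝ
        (fun s => h s (u s) (v s) + (s j - t j) * h s (u s) a) t :=
      hd.congr_of_eventuallyEq heq'.symm
    have := hd'.sub hcor
    exact this.congr_of_eventuallyEq (by filter_upwards with s; simp only [Pi.sub_apply]; ring)
  have h0 : fderiv ℝ (fun s => h s (u s) (v s)) t = 0 :=
    fderiv_zero_of_not_differentiableAt hnd
  have h1 : fderiv ℝ (fun s => h s (u s) (v1 s)) t = 0 :=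
    fderiv_zero_of_not_differentiableAt hnd1
  have d0 : del (fun s => h s (u s) (v s)) t z = 0 := by simp [del, h0]
  have d1 : del (fun s => h s (u s) (v1 s)) t z = 0 := by simp [del, h1]
  have e0 := hδ u v hu hv t ht z
  have e1 := hδ u v1 hu hv1sm t ht z
  have hvd : DifferentiableAt ℝ v t :=
    (hv.contDiffAt hUn).differentiableAt (by simp)
  have hv1t : v1 t = v t := by simp [hv1]
  have hdb : delbar v1 t z = delbar v t z + a := by
    rw [hv1, delbar_pert hvd j a z]
    simp [hz]
  rw [d0] at e0
  rw [d1, hv1t, hdb, h2add hadd hsymm ht, ← add_assoc, ← e0, zero_add] at e1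
  exact hna e1.symm

/-- K3 : differentiability of `s ↦ h s (u s) (v s)` where `v t ≠ 0`. -/
lemma diff_pair_right (hU : IsOpen U)
    (hadd : ∀ t ∈ U, ∀ u v w' : H, h t (u + v) w' = h t u w' + h t v w')
    (hsub : ∀ t ∈ U, ∀ u v w' : H, h t (u - v) w' = h t u w' - h t v w')
    (hsmul : ∀ t ∈ U, ∀ (c : ℂ) (u v : H), h t (c • u) v = c * h t u v)
    (hsymm : ∀ t ∈ U, ∀ u v : H, h t u v = starRingEnd ℂ (h t v u))
    (hpos : ∀ t ∈ U, ∀ u : H, u ≠ 0 → 0 < (h t u u).re)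
    (hδ : ∀ u v : (Fin m → ℂ) → H, ContDiffOn ℝ (⊤ : ℕ∞) u U → ContDiffOn ℝ (⊤ : ℕ∞) v U →
      ∀ t ∈ U, ∀ z : Fin m → ℂ,
        del (fun s => h s (u s) (v s)) t z = h t (δ u t z) (v t) + h t (u t) (delbar v t z))
    {u v : (Fin m → ℂ) → H} (hu : ContDiffOn ℝ (⊤ : ℕ∞) u U)
    (hv : ContDiffOn ℝ (⊤ : ℕ∞) v U)
    {t : Fin m → ℂ} (ht : t ∈ U) (j : Fin m)
    (hvt : v t ≠ 0) :
    DifferentiableAt ℝ (fun s => h s (u s) (v s)) t := by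
  have hUn : U ∈ nhds t := hU.mem_nhds ht
  have hinner : DifferentiableAt ℝ (fun s => h s (v s) (u s)) t :=
    diff_pair_left hU hadd hsub hsmul hsymm hpos hδ hv hu ht j hvt
  have hconj : DifferentiableAt ℝ (fun s => (starRingEnd ℂ) (h s (v s) (u s))) t :=
    Complex.conjCLE.toContinuousLinearMap.differentiableAt.comp t hinner
  refine hconj.congr_of_eventuallyEq ?_
  filter_upwards [hUn] with s hs
  exact hsymm s hs (u s) (v s)

/-- K4 : differentiability of `s ↦ h s (u s) (v s)` everywhere on `U`. -/
lemma diff_pair (hU : IsOpen U)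
    (hadd : ∀ t ∈ U, ∀ u v w' : H, h t (u + v) w' = h t u w' + h t v w')
    (hsub : ∀ t ∈ U, ∀ u v w' : H, h t (u - v) w' = h t u w' - h t v w')
    (hsmul : ∀ t ∈ U, ∀ (c : ℂ) (u v : H), h t (c • u) v = c * h t u v)
    (hsymm : ∀ t ∈ U, ∀ u v : H, h t u v = starRingEnd ℂ (h t v u))
    (hpos : ∀ t ∈ U, ∀ u : H, u ≠ 0 → 0 < (h t u u).re)
    (hδ : ∀ u v : (Fin m → ℂ) → H, ContDiffOn ℝ (⊤ : ℕ∞) u U → ContDiffOn ℝ (⊤ : ℕ∞) v U →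
      ∀ t ∈ U, ∀ z : Fin m → ℂ,
        del (fun s => h s (u s) (v s)) t z = h t (δ u t z) (v t) + h t (u t) (delbar v t z))
    {u v : (Fin m → ℂ) → H} (hu : ContDiffOn ℝ (⊤ : ℕ∞) u U)
    (hv : ContDiffOn ℝ (⊤ : ℕ∞) v U)
    {t : Fin m → ℂ} (ht : t ∈ U) (j : Fin m) :
    DifferentiableAt ℝ (fun s => h s (u s) (v s)) t := by
  have hUn : U ∈ nhds t := hU.mem_nhds ht
  by_cases hH : ∀ x : H, x = 0
  · have : (fun s => h s (u s) (v s)) =ᶠ[nhds t] (fun _ => (0 : ℂ)) := by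
      filter_upwards [hUn] with s hs
      rw [hH (u s)]
      exact h_zero_left hsub hs (v s)
    exact (differentiableAt_const (0 : ℂ)).congr_of_eventuallyEq this
  · push_neg at hH
    obtain ⟨e, he⟩ := hH
    -- choose constants a b
    obtain ⟨a, ha0, hua⟩ : ∃ a : H, a ≠ 0 ∧ u t + a ≠ 0 := by
      by_cases hut : u t = 0
      · exact ⟨e, he, by simp [hut, he]⟩
      · refine ⟨u t, hut, ?_⟩
        intro hc
        apply hut
        have : (2 : ℂ) • u t = 0 := by rw [two_smul]; exact hc
        simpa using (smul_eq_zero.mp this).resolve_left (by norm_num)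
    obtain ⟨b, hb0, hvb⟩ : ∃ b : H, b ≠ 0 ∧ v t + b ≠ 0 := by
      by_cases hvt : v t = 0
      · exact ⟨e, he, by simp [hvt, he]⟩
      · refine ⟨v t, hvt, ?_⟩
        intro hc
        apply hvt
        have : (2 : ℂ) • v t = 0 := by rw [two_smul]; exact hc
        simpa using (smul_eq_zero.mp this).resolve_left (by norm_num)
    have hu' : ContDiffOn ℝ (⊤ : ℕ∞) (fun s => u s + a) U := hu.add contDiffOn_const
    have hv' : ContDiffOn ℝ (⊤ : ℕ∞) (fun s => v s + b) U := hv.add contDiffOn_const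
    have d1 : DifferentiableAt ℝ (fun s => h s (u s + a) (v s + b)) t :=
      diff_pair_left hU hadd hsub hsmul hsymm hpos hδ hu' hv' ht j hua
    have d2 : DifferentiableAt ℝ (fun s => h s (u s + a) b) t :=
      diff_pair_left hU hadd hsub hsmul hsymm hpos hδ hu' contDiffOn_const ht j hua
    have d3 : DifferentiableAt ℝ (fun s => h s a (v s + b)) t :=
      diff_pair_left hU hadd hsub hsmul hsymm hpos hδ contDiffOn_const hv' ht j ha0
    have d4 : DifferentiableAt ℝ (fun s => h s a b) t :=
      diff_pair_left hU hadd hsub hsmul hsymm hpos hδ contDiffOn_const contDiffOn_const ht j ha0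
    have hcomb := ((d1.sub d2).sub d3).add d4
    refine hcomb.congr_of_eventuallyEq ?_
    filter_upwards [hUn] with s hs
    have e1 : h s (u s + a) (v s + b)
        = h s (u s) (v s) + h s (u s) b + h s a (v s) + h s a b := by
      rw [hadd s hs, h2add hadd hsymm hs, h2add hadd hsymm hs]
      ring
    have e2 : h s (u s + a) b = h s (u s) b + h s a b := hadd s hs _ _ _
    have e3 : h s a (v s + b) = h s a (v s) + h s a b := h2add hadd hsymm hs _ _ _
    simp only [Pi.add_apply, Pi.sub_apply, e1, e2, e3]
    ring
end trick2

section realf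
open Set Filter

variable {f : ℝ → ℝ}

lemma alpha_nonneg (hf2 : ContDiffOn ℝ 2 f (Set.Ici (0 : ℝ)))
    (hfmono : StrictMonoOn f (Set.Ici (0 : ℝ))) :
    0 ≤ derivWithin f (Set.Ici 0) 0 := by
  have hdiff : DifferentiableWithinAt ℝ f (Set.Ici 0) 0 :=
    (hf2.differentiableOn two_ne_zero) 0 (Set.self_mem_Ici)
  have hder := hdiff.hasDerivWithinAt
  rw [hasDerivWithinAt_iff_tendsto_slope] at hder
  have hset : Set.Ici (0:ℝ) \ {0} = Set.Ioi 0 := Set.Ici_sdiff_left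
  rw [hset] at hder
  refine ge_of_tendsto hder ?_
  filter_upwards [self_mem_nhdsWithin] with y hy
  have hy' : (0:ℝ) < y := hy
  have : f 0 ≤ f y := le_of_lt (hfmono Set.self_mem_Ici (le_of_lt hy') hy')
  have : 0 ≤ f y - f 0 := by linarith
  rw [slope_def_field]
  have : 0 ≤ (f y - f 0) / (y - 0) := div_nonneg this (by linarith)
  simpa using this

lemma deriv_nonneg_pos (hf2 : ContDiffOn ℝ 2 f (Set.Ici (0 : ℝ)))
    (hfmono : StrictMonoOn f (Set.Ici (0 : ℝ))) {x : ℝ} (hx : 0 < x) :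
    0 ≤ deriv f x := by
  have hmem : Set.Ici (0:ℝ) ∈ nhds x := Ici_mem_nhds hx
  have hdiff : DifferentiableAt ℝ f x :=
    ((hf2.contDiffAt hmem).differentiableAt two_ne_zero)
  have hder := hdiff.hasDerivAt
  rw [hasDerivAt_iff_tendsto_slope] at hder
  have hder' : Filter.Tendsto (slope f x) (nhdsWithin x (Set.Ioi x)) (nhds (deriv f x)) :=
    hder.mono_left (nhdsWithin_mono x (fun y hy => ne_of_gt hy))
  refine ge_of_tendsto hder' ?_
  filter_upwards [self_mem_nhdsWithin] with y hy
  have hy' : x < y := hy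
  have : f x ≤ f y := le_of_lt (hfmono (le_of_lt hx) (by linarith : (0:ℝ) ≤ y) hy')
  rw [slope_def_field]
  exact div_nonneg (by linarith) (by linarith)

lemma lip_near_zero (hf2 : ContDiffOn ℝ 2 f (Set.Ici (0 : ℝ))) :
    ∃ ε > (0:ℝ), ∃ K ≥ (0:ℝ), ∀ x : ℝ, 0 ≤ x → x < ε → |f x - f 0| ≤ K * x := by
  set α := derivWithin f (Set.Ici (0:ℝ)) with hα
  have hcont : ContinuousWithinAt α (Set.Ici 0) 0 :=
    (hf2.continuousOn_derivWithin (uniqueDiffOn_Ici 0) one_le_two) 0 Set.self_mem_Ici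
  have h1 : ∀ᶠ y in nhdsWithin 0 (Set.Ici 0), |α y - α 0| < 1 := by
    have := hcont.tendsto (Metric.ball_mem_nhds (α 0) one_pos)
    filter_upwards [this] with y hy
    simpa [Real.dist_eq] using hy
  rw [eventually_nhdsWithin_iff] at h1
  rw [Metric.eventually_nhds_iff] at h1
  obtain ⟨ε, hε, hball⟩ := h1
  refine ⟨ε, hε, |α 0| + 1, by positivity, ?_⟩
  intro x hx hxε
  have hbound : ∀ y ∈ Set.Icc (0:ℝ) x, ‖α y‖ ≤ |α 0| + 1 := by
    intro y hy
    have hdy : dist y (0:ℝ) < ε := by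
      rw [Real.dist_eq, sub_zero, _root_.abs_of_nonneg hy.1]
      exact lt_of_le_of_lt hy.2 hxε
    have := hball hdy hy.1
    rw [Real.norm_eq_abs]
    calc |α y| = |α 0 + (α y - α 0)| := by ring_nf
    _ ≤ |α 0| + |α y - α 0| := abs_add_le _ _
    _ ≤ |α 0| + 1 := by linarith
  have hderiv : ∀ y ∈ Set.Icc (0:ℝ) x, HasDerivWithinAt f (α y) (Set.Icc 0 x) y := by
    intro y hy
    have : DifferentiableWithinAt ℝ f (Set.Ici 0) y :=
      (hf2.differentiableOn two_ne_zero) y hy.1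
    exact this.hasDerivWithinAt.mono (Set.Icc_subset_Ici_self)
  have := Convex.norm_image_sub_le_of_norm_hasDerivWithin_le hderiv hbound
    (convex_Icc 0 x) (Set.left_mem_Icc.mpr hx) (Set.right_mem_Icc.mpr hx)
  rw [Real.norm_eq_abs, Real.norm_eq_abs] at this
  calc |f x - f 0| ≤ (|α 0| + 1) * |x - 0| := this
  _ = (|α 0| + 1) * x := by rw [sub_zero, _root_.abs_of_nonneg hx]

end realf

section cs
variable {m : ℕ} {H : Type*} [NormedAddCommGroup H] [NormedSpace ℂ H]
variable {U : Set (Fin m → ℂ)} {h : (Fin m → ℂ) → H → H → ℂ}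

lemma cauchy_schwarz
    (hadd : ∀ t ∈ U, ∀ u v w' : H, h t (u + v) w' = h t u w' + h t v w')
    (hsub : ∀ t ∈ U, ∀ u v w' : H, h t (u - v) w' = h t u w' - h t v w')
    (hsmul : ∀ t ∈ U, ∀ (c : ℂ) (u v : H), h t (c • u) v = c * h t u v)
    (hsymm : ∀ t ∈ U, ∀ u v : H, h t u v = starRingEnd ℂ (h t v u))
    (hpos : ∀ t ∈ U, ∀ u : H, u ≠ 0 → 0 < (h t u u).re)
    {t : Fin m → ℂ} (ht : t ∈ U) (w x : H) (hx : x ≠ 0) :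
    Complex.normSq (h t w x) ≤ (h t w w).re * (h t x x).re := by
  set B : ℝ := (h t x x).re with hBdef
  have hB : 0 < B := hpos t ht x hx
  set A : ℝ := (h t w w).re with hAdef
  set a : ℂ := h t w x with hadef
  set c : ℂ := a / (B : ℂ) with hcdef
  have e : h t (w - c • x) (w - c • x)
      = h t w w - (starRingEnd ℂ) c * a - c * (starRingEnd ℂ) a
        + c * (starRingEnd ℂ) c * (B : ℂ) := by
    rw [h2sub hsub hsymm ht, hsub t ht, hsub t ht, hsmul t ht,
      h2smul hsmul hsymm ht, hsmul t ht, h2smul hsmul hsymm ht]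
    rw [← hadef, (hsymm t ht x w), ← hadef, h_real hsymm ht x, ← hBdef]
    ring
  have e2 : h t (w - c • x) (w - c • x) = ((A - Complex.normSq a / B : ℝ) : ℂ) := by
    rw [e, h_real hsymm ht w, ← hAdef, hcdef]
    have hBne : (B : ℂ) ≠ 0 := by
      simp only [ne_eq, Complex.ofReal_eq_zero]
      exact ne_of_gt hB
    field_simp
    have hms : (starRingEnd ℂ) a * a = (Complex.normSq a : ℂ) := by
      rw [mul_comm, Complex.mul_conj]
    rw [Complex.mul_conj]
    push_cast
    field_simp
    ring
  have hge : 0 ≤ (h t (w - c • x) (w - c • x)).re := h_nonneg hsub hpos ht _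
  rw [e2] at hge
  simp only [Complex.ofReal_re] at hge
  have : Complex.normSq a / B ≤ A := by linarith
  calc Complex.normSq a = (Complex.normSq a / B) * B := by field_simp
  _ ≤ A * B := by
      apply mul_le_mul_of_nonneg_right this (le_of_lt hB)
end cs

section more
variable {E : Type*} [NormedAddCommGroup E] [NormedSpace ℂ E]

lemma del_add_delbar (u : E → ℂ) (t z : E) :
    del u t z + delbar u t z = fderiv ℝ u t z := by
  unfold del delbar; module

lemma hasFDerivAt_ofReal_comp {F : E → ℝ} {DF : E →L[ℝ] ℝ} {t : E}
    (hF : HasFDerivAt F DF t) :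
    HasFDerivAt (fun s => ((F s : ℝ) : ℂ)) (Complex.ofRealCLM.comp DF) t :=
  Complex.ofRealCLM.hasFDerivAt.comp t hF

lemma del_ofReal {F : E → ℝ} {DF : E →L[ℝ] ℝ} {t : E} (hF : HasFDerivAt F DF t) (z : E) :
    del (fun s => ((F s : ℝ) : ℂ)) t z
      = (2⁻¹ : ℂ) • (((DF z : ℝ) : ℂ) - Complex.I • ((DF (Complex.I • z) : ℝ) : ℂ)) := by
  unfold del
  rw [(hasFDerivAt_ofReal_comp hF).fderiv]
  rfl

lemma delbar_ofReal {F : E → ℝ} {DF : E →L[ℝ] ℝ} {t : E} (hF : HasFDerivAt F DF t) (z : E) :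
    delbar (fun s => ((F s : ℝ) : ℂ)) t z
      = (2⁻¹ : ℂ) • (((DF z : ℝ) : ℂ) + Complex.I • ((DF (Complex.I • z) : ℝ) : ℂ)) := by
  unfold delbar
  rw [(hasFDerivAt_ofReal_comp hF).fderiv]
  rfl

lemma del_ofReal_smul {F G0 : E → ℝ} {DF : E →L[ℝ] ℝ} {t : E} {r : ℝ}
    (hF : HasFDerivAt F DF t) (hG : HasFDerivAt G0 (r • DF) t) (z : E) :
    del (fun s => ((G0 s : ℝ) : ℂ)) t z = ((r : ℝ) : ℂ) * del (fun s => ((F s : ℝ) : ℂ)) t z := by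
  rw [del_ofReal hF z, del_ofReal hG z]
  simp only [ContinuousLinearMap.smul_apply, smul_eq_mul, Complex.ofReal_mul]
  push_cast
  ring

lemma delbar_ofReal_smul {F G0 : E → ℝ} {DF : E →L[ℝ] ℝ} {t : E} {r : ℝ}
    (hF : HasFDerivAt F DF t) (hG : HasFDerivAt G0 (r • DF) t) (z : E) :
    delbar (fun s => ((G0 s : ℝ) : ℂ)) t z
      = ((r : ℝ) : ℂ) * delbar (fun s => ((F s : ℝ) : ℂ)) t z := by
  rw [delbar_ofReal hF z, delbar_ofReal hG z]
  simp only [ContinuousLinearMap.smul_apply, smul_eq_mul, Complex.ofReal_mul]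
  push_cast
  ring

lemma del_clm_smul {q : E → ℂ} {D : E →L[ℝ] ℂ} {t : E} (r : ℂ)
    (hq : HasFDerivAt q (r • D) t) (z : E) :
    del q t z = r * ((2⁻¹ : ℂ) • (D z - Complex.I • D (Complex.I • z))) := by
  unfold del
  rw [hq.fderiv]
  simp only [ContinuousLinearMap.smul_apply, smul_eq_mul]
  ring
end more


/-- `h` with Chern connection `D = δ + ∂̄` and Griffiths-seminegative curvature
(`Re h(Θ_{zz̄} v, v) ≤ 0` for all smooth sections `v`), and `f : [0,∞) → ℝ` twice
differentiable, strictly increasing, concave, with `f'(x) + f''(x)·x ≥ 0` for all `x ≥ 0`.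
Then for every holomorphic section `u` of `U × H` (smooth, with `∂̄u = 0` on `U`), the
function `t ↦ f(‖u t‖²_{h_t})` is plurisubharmonic on `U`. -/
theorem statement_17 {m : ℕ} {H : Type*} [NormedAddCommGroup H] [NormedSpace ℂ H]
    (U : Set (Fin m → ℂ)) (hU : IsOpen U)
    (h : (Fin m → ℂ) → H → H → ℂ)
    (hadd : ∀ t ∈ U, ∀ u v w' : H, h t (u + v) w' = h t u w' + h t v w')
    (hsub : ∀ t ∈ U, ∀ u v w' : H, h t (u - v) w' = h t u w' - h t v w')
    (hsmul : ∀ t ∈ U, ∀ (c : ℂ) (u v : H), h t (c • u) v = c * h t u v)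
    (hsymm : ∀ t ∈ U, ∀ u v : H, h t u v = starRingEnd ℂ (h t v u))
    (hpos : ∀ t ∈ U, ∀ u : H, u ≠ 0 → 0 < (h t u u).re)
    (δ : ((Fin m → ℂ) → H) → (Fin m → ℂ) → (Fin m → ℂ) → H)
    (hδ : ∀ u v : (Fin m → ℂ) → H, ContDiffOn ℝ (⊤ : ℕ∞) u U → ContDiffOn ℝ (⊤ : ℕ∞) v U →
      ∀ t ∈ U, ∀ z : Fin m → ℂ,
        del (fun s => h s (u s) (v s)) t z = h t (δ u t z) (v t) + h t (u t) (delbar v t z))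
    (hδsm : ∀ u : (Fin m → ℂ) → H, ContDiffOn ℝ (⊤ : ℕ∞) u U →
      ∀ z : Fin m → ℂ, ContDiffOn ℝ (⊤ : ℕ∞) (fun t => δ u t z) U)
    (hδloc : ∀ u v : (Fin m → ℂ) → H, (∀ s ∈ U, u s = v s) →
      ∀ t ∈ U, ∀ z : Fin m → ℂ, δ u t z = δ v t z)
    (hδzero : ∀ t ∈ U, ∀ z : Fin m → ℂ, δ (fun _ => (0 : H)) t z = 0)
    -- Griffiths seminegativity of the curvature:
    (hGriff : ∀ v : (Fin m → ℂ) → H, ContDiffOn ℝ (⊤ : ℕ∞) v U →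
      ∀ t ∈ U, ∀ z : Fin m → ℂ, (h t (curvC δ v t z z) (v t)).re ≤ 0)
    (f : ℝ → ℝ)
    (hf2 : ContDiffOn ℝ 2 f (Set.Ici (0 : ℝ)))
    (hfmono : StrictMonoOn f (Set.Ici (0 : ℝ)))
    (hfconc : ConcaveOn ℝ (Set.Ici (0 : ℝ)) f)
    (hfcond : ∀ x : ℝ, 0 ≤ x → 0 ≤ deriv f x + deriv (deriv f) x * x)
    (u : (Fin m → ℂ) → H) (hu : ContDiffOn ℝ (⊤ : ℕ∞) u U)
    (hhol : ∀ t ∈ U, ∀ z : Fin m → ℂ, delbar u t z = 0) :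
    PshOn (fun t => f ((h t (u t) (u t)).re)) U := by
  intro t ht z
  dsimp only
  by_cases hm : m = 0
  · subst hm
    have hz : z = 0 := Subsingleton.elim z 0
    rw [hz, del_zero_dir]; simp
  have hj0 : 0 < m := Nat.pos_of_ne_zero hm
  set j : Fin m := ⟨0, hj0⟩ with hjdef
  have hUn : U ∈ nhds t := hU.mem_nhds ht
  set F : (Fin m → ℂ) → ℝ := fun s => (h s (u s) (u s)).re with hFdef
  set v : (Fin m → ℂ) → H := fun s => δ u s z with hvdef
  have hvsm : ContDiffOn ℝ (⊤ : ℕ∞) v U := hδsm u hu z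
  set ψ : (Fin m → ℂ) → ℂ := fun s => h s (u s) (v s) with hψdef
  set α : ℝ → ℝ := derivWithin f (Set.Ici 0) with hαdef
  have hgoal : (fun s' => ((f ((h s' (u s') (u s')).re) : ℝ) : ℂ))
      = (fun s' => ((f (F s') : ℝ) : ℂ)) := by funext s'; simp only [hFdef]
  rw [hgoal]
  -- basic facts
  have hFnn : ∀ s ∈ U, 0 ≤ F s := fun s hs => h_nonneg hsub hpos hs (u s)
  have hφdiff : ∀ s ∈ U, DifferentiableAt ℝ (fun s' => h s' (u s') (u s')) s :=
    fun s hs => diff_pair hU hadd hsub hsmul hsymm hpos hδ hu hu hs j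
  have hψdiff : ∀ s ∈ U, DifferentiableAt ℝ ψ s :=
    fun s hs => diff_pair hU hadd hsub hsmul hsymm hpos hδ hu hvsm hs j
  have hFdiff : ∀ s ∈ U, DifferentiableAt ℝ F s := by
    intro s hs
    exact (Complex.reCLM.differentiableAt).comp s (hφdiff s hs)
  have hev : ∀ s ∈ U, (fun s' => ((F s' : ℝ) : ℂ)) =ᶠ[nhds s] (fun s' => h s' (u s') (u s')) := by
    intro s hs
    filter_upwards [hU.mem_nhds hs] with x hx
    simp only [hFdef]
    exact (h_real hsymm hx (u x)).symm
  have hdelφ : ∀ s ∈ U, ∀ w, del (fun s' => h s' (u s') (u s')) s w = h s (δ u s w) (u s) := by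
    intro s hs w
    have e := hδ u u hu hu s hs w
    rw [hhol s hs w, h_zero_right hsub hsymm hs, add_zero] at e
    exact e
  have hdelbarφ : ∀ s ∈ U, ∀ w, delbar (fun s' => h s' (u s') (u s')) s w
      = (starRingEnd ℂ) (h s (δ u s w) (u s)) := by
    intro s hs w
    have h1 : delbar (fun s' => h s' (u s') (u s')) s w
        = delbar (fun s' => ((F s' : ℝ) : ℂ)) s w := delbar_congr (hev s hs).symm w
    rw [h1, delbar_real_conj F s w, del_congr (hev s hs) w, hdelφ s hs w]
  have hφ0 : ∀ s ∈ U, u s = 0 → fderiv ℝ (fun s' => h s' (u s') (u s')) s = 0 := by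
    intro s hs hus
    apply ContinuousLinearMap.ext
    intro w
    have hsum := del_add_delbar (fun s' => h s' (u s') (u s')) s w
    rw [hdelφ s hs w, hdelbarφ s hs w, hus, h_zero_right hsub hsymm hs] at hsum
    simpa using hsum.symm
  -- Claim Q : the inner delbar computed on U
  have keyQ : ∀ s ∈ U, delbar (fun s' => ((f (F s') : ℝ) : ℂ)) s z
      = ((α (F s) : ℝ) : ℂ) * ψ s := by
    intro s hs
    by_cases hus : u s = 0
    · have hψs : ψ s = 0 := by
        simp only [hψdef]; rw [hus]; exact h_zero_left hsub hs (v s)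
      rw [hψs, mul_zero]
      have hF0 : F s = 0 := by
        simp only [hFdef]; rw [hus, h_zero_left hsub hs]; rfl
      have hDF0 : HasFDerivAt F (0 : (Fin m → ℂ) →L[ℝ] ℝ) s := by
        have hfd : fderiv ℝ F s = 0 := by
          have hcomp : fderiv ℝ F s
              = Complex.reCLM.comp (fderiv ℝ (fun s' => h s' (u s') (u s')) s) :=
            (Complex.reCLM.hasFDerivAt.comp s (hφdiff s hs).hasFDerivAt).fderiv
          rw [hcomp, hφ0 s hs hus]
          ext w; simp
        have := (hFdiff s hs).hasFDerivAt
        rwa [hfd] at this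
      obtain ⟨ε, hε, K, hK, hlip⟩ := lip_near_zero hf2
      have hG0 : HasFDerivAt (fun s' => ((f (F s') : ℝ) : ℂ))
          (0 : (Fin m → ℂ) →L[ℝ] ℂ) s := by
        refine .of_isLittleO ?_
        have hbig : (fun s' => ((f (F s') : ℝ) : ℂ) - ((f (F s) : ℝ) : ℂ) - 0)
            =O[nhds s] (fun s' => F s' - F s - (0 : (Fin m → ℂ) →L[ℝ] ℝ) (s' - s)) := by
          apply Asymptotics.IsBigO.of_bound K
          have hFev : ∀ᶠ s' in nhds s, F s' < ε := by
            have := (hFdiff s hs).continuousAt.eventually_mem (Iio_mem_nhds (by rw [hF0]; exact hε))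
            simpa using this
          filter_upwards [hFev, hU.mem_nhds hs] with x hx1 hx2
          have hb := hlip (F x) (hFnn x hx2) hx1
          simp only [ContinuousLinearMap.zero_apply, sub_zero, hF0]
          rw [← Complex.ofReal_sub, Complex.norm_real, Real.norm_eq_abs, Real.norm_eq_abs,
            _root_.abs_of_nonneg (hFnn x hx2)]
          exact hb
        have hlit : (fun s' => F s' - F s - (0 : (Fin m → ℂ) →L[ℝ] ℝ) (s' - s))
            =o[nhds s] (fun s' => s' - s) := HasFDerivAt.isLittleO hDF0
        exact hbig.trans_isLittleO hlit
      simp [delbar, hG0.fderiv]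
    · have hFpos : 0 < F s := hpos s hs (u s) hus
      have hfd : DifferentiableAt ℝ f (F s) :=
        (hf2.contDiffAt (Ici_mem_nhds hFpos)).differentiableAt two_ne_zero
      have hα : α (F s) = deriv f (F s) := derivWithin_of_mem_nhds (Ici_mem_nhds hFpos)
      have hFd := (hFdiff s hs).hasFDerivAt
      have hGd : HasFDerivAt (fun s' => f (F s')) (deriv f (F s) • fderiv ℝ F s) s :=
        hfd.hasDerivAt.comp_hasFDerivAt s hFd
      have e1 : delbar (fun s' => ((f (F s') : ℝ) : ℂ)) s z
          = ((deriv f (F s) : ℝ) : ℂ) * delbar (fun s' => ((F s' : ℝ) : ℂ)) s z :=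
        delbar_ofReal_smul hFd hGd z
      rw [e1, hα, delbar_congr (hev s hs) z, hdelbarφ s hs z]
      congr 1
      rw [hψdef]
      exact (hsymm s hs (u s) (v s)).symm
  -- outer computation
  have hq_ev : (fun s => delbar (fun s' => ((f (F s') : ℝ) : ℂ)) s z)
      =ᶠ[nhds t] (fun s => ((α (F s) : ℝ) : ℂ) * ψ s) := by
    filter_upwards [hUn] with s hs using keyQ s hs
  rw [del_congr hq_ev z]
  have hΘid : delbar v t z = - curvC δ u t z z := by
    have h0 : δ (fun s => delbar u s z) t z = δ (fun _ => (0 : H)) t z :=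
      hδloc _ _ (fun s hs => hhol s hs z) t ht z
    rw [show curvC δ u t z z
        = δ (fun s => delbar u s z) t z - delbar (fun s => δ u s z) t z from rfl,
      h0, hδzero t ht z, zero_sub, neg_neg, hvdef]
  have hneg : h t (u t) (- curvC δ u t z z) = - h t (u t) (curvC δ u t z z) := by
    have e := h2sub hsub hsymm ht (u t) 0 (curvC δ u t z z)
    rw [zero_sub] at e
    rw [e, h_zero_right hsub hsymm ht, zero_sub]
  have hdelψ : del ψ t z = h t (v t) (v t) - h t (u t) (curvC δ u t z z) := by
    have e := hδ u v hu hvsm t ht z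
    rw [hΘid, hneg] at e
    simpa [hvdef, sub_eq_add_neg] using e
  by_cases hut : u t = 0
  · -- case u t = 0
    have hψt : ψ t = 0 := by
      simp only [hψdef]; rw [hut]; exact h_zero_left hsub ht (v t)
    have hFt : F t = 0 := by
      simp only [hFdef]; rw [hut, h_zero_left hsub ht]; rfl
    have hψD := (hψdiff t ht).hasFDerivAt
    have hQ : HasFDerivAt (fun s => ((α (F s) : ℝ) : ℂ) * ψ s)
        (((α 0 : ℝ) : ℂ) • fderiv ℝ ψ t) t := by
      refine .of_isLittleO ?_
      have part2 : (fun s' => ((α 0 : ℝ) : ℂ) * (ψ s' - ψ t - fderiv ℝ ψ t (s' - t)))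
          =o[nhds t] (fun s' => s' - t) :=
        (HasFDerivAt.isLittleO hψD).const_mul_left _
      have htend : Filter.Tendsto (fun s' => α (F s')) (nhds t) (nhds (α 0)) := by
        have hαc : ContinuousWithinAt α (Set.Ici 0) 0 :=
          (hf2.continuousOn_derivWithin (uniqueDiffOn_Ici 0) one_le_two) 0 Set.self_mem_Ici
        have hF0' : Filter.Tendsto F (nhds t) (nhdsWithin 0 (Set.Ici 0)) := by
          apply tendsto_nhdsWithin_of_tendsto_nhds_of_eventually_within
          · have := (hFdiff t ht).continuousAt.tendsto
            rwa [hFt] at this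
          · filter_upwards [hUn] with s hs using hFnn s hs
        exact hαc.tendsto.comp hF0'
      have htendC : Filter.Tendsto (fun s' => ((α (F s') : ℝ) : ℂ) - ((α 0 : ℝ) : ℂ))
          (nhds t) (nhds 0) := by
        have hoc : Filter.Tendsto (fun s' => ((α (F s') : ℝ) : ℂ)) (nhds t)
            (nhds ((α 0 : ℝ) : ℂ)) := (Complex.continuous_ofReal.tendsto _).comp htend
        simpa using hoc.sub_const (((α 0 : ℝ) : ℂ))
      have hsmall : (fun s' => ((α (F s') : ℝ) : ℂ) - ((α 0 : ℝ) : ℂ))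
          =o[nhds t] (fun _ : Fin m → ℂ => (1 : ℝ)) :=
        (Asymptotics.isLittleO_one_iff ℝ).mpr htendC
      have hOψ : ψ =O[nhds t] (fun s' => ‖s' - t‖) := by
        have hbo := (hψdiff t ht).isBigO_sub
        simpa [hψt] using hbo.norm_right
      have part1 : (fun s' => (((α (F s') : ℝ) : ℂ) - ((α 0 : ℝ) : ℂ)) * ψ s')
          =o[nhds t] (fun s' => s' - t) := by
        have hmul := hsmall.mul_isBigO hOψ
        refine hmul.trans_isBigO ?_
        apply Asymptotics.isBigO_of_le
        intro x
        simp
      have hsum := part1.add part2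
      refine hsum.congr (fun s' => ?_) (fun s' => rfl)
      simp only [ContinuousLinearMap.smul_apply, smul_eq_mul, hψt]
      ring
    have hdel : del (fun s => ((α (F s) : ℝ) : ℂ) * ψ s) t z
        = ((α 0 : ℝ) : ℂ) * del ψ t z := by
      rw [del_clm_smul (((α 0 : ℝ) : ℂ)) hQ z]
      rfl
    rw [hdel, hdelψ, hut, h_zero_left hsub ht, sub_zero, Complex.re_ofReal_mul]
    exact mul_nonneg (alpha_nonneg hf2 hfmono) (h_nonneg hsub hpos ht (v t))
  · -- case u t ≠ 0
    have hFt : 0 < F t := hpos t ht (u t) hut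
    have hαF : (fun s => ((α (F s) : ℝ) : ℂ) * ψ s)
        =ᶠ[nhds t] (fun s => ((deriv f (F s) : ℝ) : ℂ) * ψ s) := by
      have hFev : ∀ᶠ s in nhds t, F s ∈ Set.Ioi (0 : ℝ) :=
        (hFdiff t ht).continuousAt.eventually_mem (Ioi_mem_nhds hFt)
      filter_upwards [hFev] with s hFs
      have : α (F s) = deriv f (F s) := derivWithin_of_mem_nhds (Ici_mem_nhds hFs)
      rw [this]
    rw [del_congr hαF z]
    have hFd := (hFdiff t ht).hasFDerivAt
    obtain ⟨V, hVmem, hVf⟩ := (hf2.contDiffAt (Ici_mem_nhds hFt)).contDiffOn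
      (le_refl 2) (by simp)
    obtain ⟨V', hV'sub, hV'open, htV'⟩ := mem_nhds_iff.mp hVmem
    have hd1 : ContDiffOn ℝ 1 (deriv f) V' :=
      (hVf.mono hV'sub).deriv_of_isOpen hV'open (by norm_num)
    have hfd2 : DifferentiableAt ℝ (deriv f) (F t) :=
      (hd1.contDiffAt (hV'open.mem_nhds htV')).differentiableAt one_ne_zero
    have hpd : DifferentiableAt ℝ (fun s => ((deriv f (F s) : ℝ) : ℂ)) t :=
      Complex.ofRealCLM.differentiableAt.comp t (hfd2.comp t (hFdiff t ht))
    rw [del_mul hpd (hψdiff t ht) z]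
    have hGd : HasFDerivAt (fun s => deriv f (F s))
        (deriv (deriv f) (F t) • fderiv ℝ F t) t :=
      hfd2.hasDerivAt.comp_hasFDerivAt t hFd
    have hdelp : del (fun s => ((deriv f (F s) : ℝ) : ℂ)) t z
        = ((deriv (deriv f) (F t) : ℝ) : ℂ) * del (fun s' => ((F s' : ℝ) : ℂ)) t z :=
      del_ofReal_smul hFd hGd z
    have hdelF : del (fun s' => ((F s' : ℝ) : ℂ)) t z = h t (v t) (u t) := by
      rw [del_congr (hev t ht) z, hdelφ t ht z, hvdef]
    have hψt : ψ t = (starRingEnd ℂ) (h t (v t) (u t)) := by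
      simp only [hψdef]
      exact hsymm t ht (u t) (v t)
    rw [hdelp, hdelF, hdelψ]
    simp only [hψt]
    have hGr := hGriff u hu t ht z
    have hre : (((deriv (deriv f) (F t) : ℝ) : ℂ) * h t (v t) (u t)
          * (starRingEnd ℂ) (h t (v t) (u t))
        + ((deriv f (F t) : ℝ) : ℂ)
          * (h t (v t) (v t) - h t (u t) (curvC δ u t z z))).re
        = deriv (deriv f) (F t) * Complex.normSq (h t (v t) (u t))
          + deriv f (F t) * ((h t (v t) (v t)).re - (h t (u t) (curvC δ u t z z)).re) := by
      rw [mul_assoc, Complex.mul_conj]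
      simp [Complex.add_re, Complex.re_ofReal_mul, Complex.sub_re]
    rw [hre]
    have hRle : (h t (u t) (curvC δ u t z z)).re ≤ 0 := by
      have e := hsymm t ht (u t) (curvC δ u t z z)
      rw [e, Complex.conj_re]
      exact hGr
    have hSnn : 0 ≤ (h t (v t) (v t)).re := h_nonneg hsub hpos ht (v t)
    have hf1 : 0 ≤ deriv f (F t) := deriv_nonneg_pos hf2 hfmono hFt
    have hCS : Complex.normSq (h t (v t) (u t)) ≤ (h t (v t) (v t)).re * F t :=
      cauchy_schwarz hadd hsub hsmul hsymm hpos ht (v t) (u t) hut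
    have hcond := hfcond (F t) (le_of_lt hFt)
    have hN : 0 ≤ Complex.normSq (h t (v t) (u t)) := Complex.normSq_nonneg _
    rcases le_or_gt 0 (deriv (deriv f) (F t)) with hf2s | hf2s
    · have h1 : 0 ≤ deriv (deriv f) (F t) * Complex.normSq (h t (v t) (u t)) :=
        mul_nonneg hf2s hN
      have h2 : 0 ≤ deriv f (F t)
          * ((h t (v t) (v t)).re - (h t (u t) (curvC δ u t z z)).re) :=
        mul_nonneg hf1 (by linarith)
      linarith
    · have hkey : deriv (deriv f) (F t) * ((h t (v t) (v t)).re * F t)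
          ≤ deriv (deriv f) (F t) * Complex.normSq (h t (v t) (u t)) :=
        mul_le_mul_of_nonpos_left hCS (le_of_lt hf2s)
      have h1 : 0 ≤ (h t (v t) (v t)).re
          * (deriv f (F t) + deriv (deriv f) (F t) * F t) := mul_nonneg hSnn hcond
      have h2 : 0 ≤ deriv f (F t) * (-(h t (u t) (curvC δ u t z z)).re) :=
        mul_nonneg hf1 (by linarith)
      nlinarith [h1, h2, hkey]
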